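/- Let K ⊆ ℝ^n be a cone (closed under multiplication by nonnegative scalars), let g : ℝ^m → ℝ be a subadditive function with g(0) = 0, and let N ∈ ℝ^{m×n} and e ∈ ℝ^n. Then g(Nv) ≤ e^Tv for all v ∈ K if and only if ḡ(Nv) ≤ e^Tv for all v ∈ K, where ḡ(x) := limsup_{δ→0⁺} g(δx)/δ (valued in ℝ ∪ {±∞}). -/

import Mathlib

open Matrix Filter

lemma gbar_nsmul {m : ℕ} (g : (Fin m → ℝ) → ℝ)
    (hsub : ∀ u v : Fin m → ℝ, g (u + v) ≤ g u + g v)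
    (hg0 : g 0 = 0) : ∀ (k : ℕ) (y : Fin m → ℝ), g (k • y) ≤ k * g y := by
  intro k y
  induction k with
  | zero => simp [hg0]
  | succ k ih =>
      have : (k + 1) • y = k • y + y := succ_nsmul y k
      rw [this]
      calc g (k • y + y) ≤ g (k • y) + g y := hsub _ _
        _ ≤ k * g y + g y := by linarith
        _ = (k + 1 : ℕ) * g y := by push_cast; ring

/-- For a subadditive `g` with `g(0) = 0`, a cone `K`, a matrix `N` and vector `e`:
`g(Nv) ≤ eᵀv` on `K` iff `ḡ(Nv) ≤ eᵀv` on `K`, where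
`ḡ(x) = limsup_{δ→0⁺} g(δx)/δ` (valued in the extended reals). -/
theorem g_iff_gbar {m n : ℕ} (K : Set (Fin n → ℝ))
    (hK : ∀ v ∈ K, ∀ t : ℝ, 0 ≤ t → t • v ∈ K)
    (g : (Fin m → ℝ) → ℝ)
    (hsub : ∀ u v : Fin m → ℝ, g (u + v) ≤ g u + g v)
    (hg0 : g 0 = 0)
    (N : Matrix (Fin m) (Fin n) ℝ) (e : Fin n → ℝ) :
    (∀ v ∈ K, g (N.mulVec v) ≤ e ⬝ᵥ v) ↔
      (∀ v ∈ K,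
        Filter.limsup (fun δ : ℝ => ((g (δ • N.mulVec v) / δ : ℝ) : EReal))
            (nhdsWithin 0 (Set.Ioi 0)) ≤ ((e ⬝ᵥ v : ℝ) : EReal)) := by
  constructor
  · intro h v hv
    apply Filter.limsup_le_of_le (by isBoundedDefault)
    filter_upwards [self_mem_nhdsWithin] with δ hδ
    have hδ0 : (0 : ℝ) < δ := hδ
    have h1 := h (δ • v) (hK v hv δ hδ0.le)
    rw [Matrix.mulVec_smul, dotProduct_smul] at h1
    have h2 : g (δ • N.mulVec v) / δ ≤ e ⬝ᵥ v := by
      rw [div_le_iff₀ hδ0]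
      simpa [mul_comm] using h1
    exact_mod_cast h2
  · intro h v hv
    set x := N.mulVec v with hx
    have key : ∀ k : ℕ,
        g x ≤ g ((((k : ℝ) + 1)⁻¹) • x) / (((k : ℝ) + 1)⁻¹) := by
      intro k
      have hk : (0 : ℝ) < (k : ℝ) + 1 := by positivity
      have heq : ((k + 1 : ℕ) • ((((k : ℝ) + 1)⁻¹) • x)) = x := by
        rw [← Nat.cast_smul_eq_nsmul ℝ, smul_smul]
        push_cast
        rw [mul_inv_cancel₀ hk.ne', one_smul]
      have := gbar_nsmul g hsub hg0 (k + 1) ((((k : ℝ) + 1)⁻¹) • x)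
      rw [heq] at this
      rw [div_eq_mul_inv, inv_inv]
      calc g x ≤ ((k + 1 : ℕ) : ℝ) * g ((((k : ℝ) + 1)⁻¹) • x) := this
        _ = g ((((k : ℝ) + 1)⁻¹) • x) * ((k : ℝ) + 1) := by push_cast; ring
    have htend : Tendsto (fun k : ℕ => (((k : ℝ) + 1)⁻¹)) atTop
        (nhdsWithin 0 (Set.Ioi 0)) := by
      apply tendsto_nhdsWithin_of_tendsto_nhds_of_eventually_within
      · simpa using tendsto_one_div_add_atTop_nhds_zero_nat (𝕜 := ℝ)
      · filter_upwards with k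
        have : (0 : ℝ) < (k : ℝ) + 1 := by positivity
        exact inv_pos.mpr this
    have freq : ∃ᶠ δ in nhdsWithin 0 (Set.Ioi 0),
        ((g x : ℝ) : EReal) ≤ ((g (δ • x) / δ : ℝ) : EReal) := by
      apply htend.frequently
      apply Filter.Frequently.of_forall
      intro k
      exact_mod_cast key k
    have hle : ((g x : ℝ) : EReal) ≤
        Filter.limsup (fun δ : ℝ => ((g (δ • x) / δ : ℝ) : EReal))
          (nhdsWithin 0 (Set.Ioi 0)) :=
      Filter.le_limsup_of_frequently_le freq
    exact_mod_cast hle.trans (h v hv)
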